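/- Let a > 0 and let (a_n) be a complex sequence with Re(a_n) ≥ a/2 and |Im(a_n)| ≤ c₀|g₀| for all n, where g₀ is a complex number with |g₀| < ε and |Arg(g₀)| ≤ π − δ for some δ ∈ (0, π/2). Define A_n = (1/n)·Σ_{k=0}^{n-1} a_k and g̃_n = g₀/(1 + g₀·n·A_n). Then, if ε is small enough (depending on δ, a, c₀), for all n ≥ 0 one has |1 + g₀·n·A_n| ≥ (1/2)·sin δ; in particular g̃_n is well defined. -/

import Mathlib

open Real Complex

/-- Key quadratic estimate. -/
lemma keyquad_aux (u v t : ℝ) (ht : 0 < t) (h : u < 0 → t * (-u) ≤ |v|) :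
    t ^ 2 / (1 + t ^ 2) ≤ (1 + u) ^ 2 + v ^ 2 := by
  have h1 : (0:ℝ) < 1 + t ^ 2 := by positivity
  rcases le_or_gt 0 u with hu | hu
  · have h2 : t ^ 2 / (1 + t ^ 2) ≤ 1 := by
      rw [div_le_one h1]; nlinarith
    nlinarith [sq_nonneg v]
  · have hv := h hu
    have hv2 : t ^ 2 * u ^ 2 ≤ v ^ 2 := by
      have h3 : 0 ≤ t * (-u) := by nlinarith
      have h4 := mul_le_mul hv hv h3 (abs_nonneg v)
      have h5 : |v| * |v| = v ^ 2 := by rw [← abs_mul, abs_mul_self]; ring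
      nlinarith
    rw [div_le_iff₀ h1]
    nlinarith [sq_nonneg ((1 + t ^ 2) * u + 1), mul_nonneg (sub_nonneg.mpr hv2) h1.le]

/-- Angle transfer. -/
lemma transfer_aux (T t η x y xS yS : ℝ) (hT : 0 < T) (ht : 0 < t) (hη : 0 < η)
    (hη1 : t * η ≤ 1 / 2) (hη2 : η ≤ 1 / 2) (hη3 : η * (1 + t * T) ≤ T - t)
    (hxS : 0 < xS) (hyS : |yS| ≤ η * xS)
    (hg : x < 0 → T * (-x) ≤ |y|) (hu : x * xS - y * yS < 0) :
    t * (-(x * xS - y * yS)) ≤ |x * yS + y * xS| := by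
  have hyyS : y * yS ≤ |y| * (η * xS) := by
    calc y * yS ≤ |y * yS| := le_abs_self _
      _ = |y| * |yS| := abs_mul _ _
      _ ≤ |y| * (η * xS) := mul_le_mul_of_nonneg_left hyS (abs_nonneg y)
  have hvlb : |y| * xS - |x| * |yS| ≤ |x * yS + y * xS| := by
    have h1 : |y * xS| ≤ |x * yS + y * xS| + |x * yS| := by
      calc |y * xS| = |(x * yS + y * xS) + (-(x * yS))| := by ring_nf
        _ ≤ |x * yS + y * xS| + |(-(x * yS))| := abs_add_le _ _
        _ = |x * yS + y * xS| + |x * yS| := by rw [abs_neg]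
    have h2 : |y * xS| = |y| * xS := by rw [abs_mul, abs_of_pos hxS]
    have h3 : |x * yS| = |x| * |yS| := abs_mul _ _
    linarith
  rcases le_or_gt 0 x with hx | hx
  · -- x ≥ 0 : then x is small compared to η|y|
    have hxlt : x * xS < |y| * (η * xS) := by nlinarith
    have hx2 : x < η * |y| :=
      (mul_lt_mul_iff_left₀ hxS).mp (by nlinarith : x * xS < (η * |y|) * xS)
    have hxabs : |x| = x := abs_of_nonneg hx
    have hub : -(x * xS - y * yS) ≤ |y| * (η * xS) := by
      nlinarith [mul_nonneg hx hxS.le]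
    have hv : |y| * xS * (1 - η * η) ≤ |x * yS + y * xS| := by
      rw [hxabs] at hvlb
      have h6 := mul_le_mul hx2.le hyS (abs_nonneg yS) (by positivity)
      nlinarith [hvlb, h6]
    have hy0 : 0 < |y| := by
      rcases eq_or_lt_of_le (abs_nonneg y) with h | h
      · exfalso
        have hy : y = 0 := abs_eq_zero.mp h.symm
        nlinarith [mul_nonneg hx hxS.le]
      · exact h
    have hA : t * η ≤ 1 - η * η := by nlinarith
    have hB := mul_le_mul_of_nonneg_right hA (mul_nonneg (abs_nonneg y) hxS.le)
    have hC : t * (|y| * (η * xS)) ≤ |y| * xS * (1 - η * η) := by nlinarith [hB]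
    have hD := mul_le_mul_of_nonneg_left hub ht.le
    linarith
  · -- x < 0 : use the argument hypothesis
    have hgx := hg hx
    have hy0 : 0 < |y| := lt_of_lt_of_le (by nlinarith) hgx
    have hxb : -x ≤ |y| / T := by
      rw [le_div_iff₀ hT]; nlinarith
    have hub : -(x * xS - y * yS) ≤ (|y| / T) * xS + |y| * (η * xS) := by
      nlinarith
    have hv : |y| * xS - (|y| / T) * (η * xS) ≤ |x * yS + y * xS| := by
      have h4 : |x| * |yS| ≤ (|y| / T) * (η * xS) := by
        rw [abs_of_neg hx]
        exact mul_le_mul hxb hyS (abs_nonneg yS) (by positivity)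
      linarith
    have hkey : t * ((|y| / T) * xS + |y| * (η * xS)) ≤
        |y| * xS - (|y| / T) * (η * xS) := by
      have hT' : T ≠ 0 := ne_of_gt hT
      have key0 : t * (1 + η * T) ≤ T - η := by nlinarith
      have h0 : (0:ℝ) ≤ |y| * xS := mul_nonneg (abs_nonneg y) hxS.le
      calc t * ((|y| / T) * xS + |y| * (η * xS))
          = (t * (1 + η * T)) * (|y| * xS) / T := by field_simp
        _ ≤ (T - η) * (|y| * xS) / T :=
            div_le_div_of_nonneg_right' (mul_le_mul_of_nonneg_right key0 h0) hT
        _ = |y| * xS - (|y| / T) * (η * xS) := by field_simp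
    have hD := mul_le_mul_of_nonneg_left hub ht.le
    linarith
where
  div_le_div_of_nonneg_right' {a b c : ℝ} (h : a ≤ b) (hc : 0 < c) : a / c ≤ b / c :=
    (div_le_div_iff_of_pos_right hc).mpr h

/-- From the argument bound, algebraic lower bound on the imaginary part. -/
lemma argToAlg_aux (δ : ℝ) (hδ0 : 0 < δ) (hδ2 : δ < π / 2) (g : ℂ)
    (harg : |g.arg| ≤ π - δ) (hre : g.re < 0) :
    Real.sin δ * ‖g‖ ≤ |g.im| := by
  have hg0 : g ≠ 0 := fun h => by simp [h] at hre
  have habs : 0 < ‖g‖ := norm_pos_iff.mpr hg0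
  have hπ := Real.pi_pos
  have hmem : δ ∈ Set.Ioc (-(π/2)) (π/2) := ⟨by linarith, le_of_lt hδ2⟩
  rcases le_or_gt 0 g.im with him | him
  · rw [Complex.arg_of_re_neg_of_im_nonneg hre him] at harg
    have h1 : Real.arcsin ((-g).im / ‖g‖) + π ≤ π - δ :=
      le_trans (le_abs_self _) harg
    have h3 : δ ≤ Real.arcsin (g.im / ‖g‖) := by
      have h2 : Real.arcsin (-(g.im / ‖g‖)) ≤ -δ := by
        have he : (-g).im / ‖g‖ = -(g.im / ‖g‖) := by
          simp [neg_div]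
        rw [he] at h1; linarith
      rw [Real.arcsin_neg] at h2; linarith
    have h4 : Real.sin δ ≤ g.im / ‖g‖ :=
      (Real.le_arcsin_iff_sin_le' hmem).mp h3
    rw [_root_.abs_of_nonneg him]
    calc Real.sin δ * ‖g‖ ≤ (g.im / ‖g‖) * ‖g‖ :=
          mul_le_mul_of_nonneg_right h4 habs.le
      _ = g.im := div_mul_cancel₀ _ (ne_of_gt habs)
  · rw [Complex.arg_of_re_neg_of_im_neg hre him] at harg
    have h1 : -(π - δ) ≤ Real.arcsin ((-g).im / ‖g‖) - π := by
      have := neg_abs_le (Real.arcsin ((-g).im / ‖g‖) - π)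
      linarith
    have h3 : δ ≤ Real.arcsin (-g.im / ‖g‖) := by
      have he : (-g).im = -g.im := by simp
      rw [he] at h1; linarith
    have h4 : Real.sin δ ≤ -g.im / ‖g‖ :=
      (Real.le_arcsin_iff_sin_le' hmem).mp h3
    rw [_root_.abs_of_neg him]
    calc Real.sin δ * ‖g‖ ≤ (-g.im / ‖g‖) * ‖g‖ :=
          mul_le_mul_of_nonneg_right h4 habs.le
      _ = -g.im := div_mul_cancel₀ _ (ne_of_gt habs)

/-- Algebraic version of the argument condition, with tangent. -/
lemma galg_aux (s c T x y r : ℝ) (hs : 0 < s) (hc : 0 < c)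
    (hpyth : s ^ 2 + c ^ 2 = 1) (hT : T * c = s) (hr : 0 < r)
    (h2 : x ^ 2 + y ^ 2 = r ^ 2) (h1 : s * r ≤ |y|) (hx : x < 0) :
    T * (-x) ≤ |y| := by
  have h3 : s ^ 2 * (x ^ 2 + y ^ 2) ≤ y ^ 2 := by
    have h4 := mul_le_mul h1 h1 (by positivity) (abs_nonneg y)
    have h5 : |y| * |y| = y ^ 2 := by rw [← abs_mul, abs_mul_self]; ring
    nlinarith
  have h4 : s ^ 2 * x ^ 2 ≤ c ^ 2 * y ^ 2 := by nlinarith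
  have h5 : s * (-x) ≤ c * |y| := by
    have ha1 : 0 ≤ s * (-x) := by nlinarith
    have ha2 : 0 ≤ c * |y| := by positivity
    have h6 : (s * (-x)) ^ 2 ≤ (c * |y|) ^ 2 := by nlinarith [_root_.sq_abs y]
    have h7 := Real.sqrt_le_sqrt h6
    rwa [Real.sqrt_sq ha1, Real.sqrt_sq ha2] at h7
  have hT' : T = s / c := by field_simp [ne_of_gt hc] at hT ⊢; linarith
  rw [hT', div_mul_eq_mul_div, div_le_iff₀ hc]
  nlinarith

/-- Comparing `sin² (δ/2)` with `tan²(δ/2)/(1+tan²(δ/2))`. -/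
lemma tansq_aux (s c t : ℝ) (hc : 0 < c) (hpyth : s ^ 2 + c ^ 2 = 1)
    (ht : t * c = s) : s ^ 2 ≤ t ^ 2 / (1 + t ^ 2) := by
  rw [le_div_iff₀ (by positivity : (0:ℝ) < 1 + t ^ 2)]
  have h1 : t ^ 2 * c ^ 2 = s ^ 2 := by rw [← ht]; ring
  nlinarith

lemma half_aux (s c : ℝ) (hs : 0 ≤ s) (hc1 : c ≤ 1) (hc0 : 0 ≤ c) :
    (2 * s * c / 2) ^ 2 ≤ s ^ 2 := by
  have h1 : c ^ 2 ≤ 1 := by nlinarith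
  have h2 : 0 ≤ s ^ 2 * (1 - c ^ 2) := mul_nonneg (sq_nonneg s) (by linarith)
  nlinarith

theorem stmt_0 (a c₀ δ : ℝ) (ha : 0 < a) (hc₀ : 0 < c₀)
    (hδ : δ ∈ Set.Ioo 0 (π / 2)) :
    ∃ ε₀ > 0, ∀ ε : ℝ, 0 < ε → ε ≤ ε₀ →
      ∀ g₀ : ℂ, ‖g₀‖ < ε → |g₀.arg| ≤ π - δ →
        ∀ aseq : ℕ → ℂ,
          (∀ n, a / 2 ≤ (aseq n).re) →
          (∀ n, |(aseq n).im| ≤ c₀ * ‖g₀‖) →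
          ∀ n : ℕ,
            Real.sin δ / 2 ≤
              ‖1 + g₀ * n * ((n : ℂ)⁻¹ * ∑ k ∈ Finset.range n, aseq k)‖ := by
  obtain ⟨hδ0, hδ2⟩ := hδ
  have hπ := Real.pi_pos
  have hsδ : 0 < Real.sin δ := Real.sin_pos_of_pos_of_lt_pi hδ0 (by linarith)
  have hcδ : 0 < Real.cos δ := Real.cos_pos_of_mem_Ioo ⟨by linarith, hδ2⟩
  have hs2 : 0 < Real.sin (δ/2) := Real.sin_pos_of_pos_of_lt_pi (by linarith) (by linarith)
  have hc2 : 0 < Real.cos (δ/2) := Real.cos_pos_of_mem_Ioo ⟨by linarith, by linarith⟩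
  set T := Real.tan δ with hTdef
  set t := Real.tan (δ/2) with htdef
  have hTc : T * Real.cos δ = Real.sin δ := by
    rw [hTdef, Real.tan_eq_sin_div_cos]
    field_simp
  have htc : t * Real.cos (δ/2) = Real.sin (δ/2) := by
    rw [htdef, Real.tan_eq_sin_div_cos]
    field_simp
  have hTpos : 0 < T := Real.tan_pos_of_pos_of_lt_pi_div_two hδ0 hδ2
  have htpos : 0 < t := Real.tan_pos_of_pos_of_lt_pi_div_two (by linarith) (by linarith)
  have htT : t < T :=
    Real.tan_lt_tan_of_nonneg_of_lt_pi_div_two (by linarith) hδ2 (by linarith)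
  set η₀ : ℝ := min (1/(2*t+2)) ((T - t)/(1 + t*T)) with hη₀def
  have htT0 : (0:ℝ) < 1 + t * T := by nlinarith [mul_pos htpos hTpos]
  have hη₀pos : 0 < η₀ :=
    lt_min (div_pos one_pos (by linarith)) (div_pos (by linarith) htT0)
  refine ⟨a * η₀ / (2 * c₀), div_pos (mul_pos ha hη₀pos) (by linarith), ?_⟩
  intro ε hε hεε₀ g₀ hg₀ harg aseq hre him n
  rcases Nat.eq_zero_or_pos n with hn | hn
  · subst hn
    simp only [Nat.cast_zero, mul_zero, zero_mul, add_zero, map_one, norm_one]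
    linarith [Real.sin_le_one δ]
  rcases eq_or_ne g₀ 0 with hg0 | hg0
  · subst hg0
    simp only [zero_mul, add_zero, map_one, norm_one]
    linarith [Real.sin_le_one δ]
  have habspos : 0 < ‖g₀‖ := norm_pos_iff.mpr hg0
  set S : ℂ := ∑ k ∈ Finset.range n, aseq k with hSdef
  have hcast : (n : ℂ) ≠ 0 := Nat.cast_ne_zero.mpr hn.ne'
  have heq : g₀ * n * ((n : ℂ)⁻¹ * S) = g₀ * S := by
    field_simp
  rw [heq]
  set x := g₀.re with hxdef
  set y := g₀.im with hydef
  set xS := S.re with hxSdef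
  set yS := S.im with hySdef
  have hxS1 : (n : ℝ) * (a / 2) ≤ xS := by
    rw [hxSdef, hSdef, Complex.re_sum]
    calc (n : ℝ) * (a / 2) = ∑ _k ∈ Finset.range n, (a / 2) := by
          rw [Finset.sum_const, Finset.card_range, nsmul_eq_mul]
      _ ≤ ∑ k ∈ Finset.range n, (aseq k).re := Finset.sum_le_sum fun k _ => hre k
  have hxSpos : 0 < xS := by
    have h1 : (0:ℝ) < (n:ℝ) := Nat.cast_pos.mpr hn
    nlinarith
  have hyS1 : |yS| ≤ (n : ℝ) * (c₀ * ‖g₀‖) := by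
    rw [hySdef, hSdef, Complex.im_sum]
    calc |∑ k ∈ Finset.range n, (aseq k).im| ≤ ∑ k ∈ Finset.range n, |(aseq k).im| :=
          Finset.abs_sum_le_sum_abs _ _
      _ ≤ ∑ _k ∈ Finset.range n, (c₀ * ‖g₀‖) :=
          Finset.sum_le_sum fun k _ => him k
      _ = (n : ℝ) * (c₀ * ‖g₀‖) := by
          rw [Finset.sum_const, Finset.card_range, nsmul_eq_mul]
  set η : ℝ := 2 * c₀ * ‖g₀‖ / a with hηdef
  have hηpos : 0 < η := by positivity
  have hηlt : η < η₀ := by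
    have h1 : ‖g₀‖ < a * η₀ / (2 * c₀) := lt_of_lt_of_le hg₀ hεε₀
    rw [hηdef, div_lt_iff₀ ha]
    calc 2 * c₀ * ‖g₀‖ < 2 * c₀ * (a * η₀ / (2 * c₀)) :=
          mul_lt_mul_of_pos_left h1 (by positivity)
      _ = η₀ * a := by field_simp
  have hηa : η ≤ 1/(2*t+2) := le_of_lt (lt_of_lt_of_le hηlt (min_le_left _ _))
  have hηb : η ≤ (T - t)/(1 + t*T) := le_of_lt (lt_of_lt_of_le hηlt (min_le_right _ _))
  have h2t : (0:ℝ) < 2*t+2 := by linarith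
  have hc1 : t * η ≤ 1 / 2 := by
    have h2 := mul_le_mul_of_nonneg_left hηa htpos.le
    have h3 : t * (1/(2*t+2)) ≤ 1/2 := by
      rw [mul_one_div, div_le_iff₀ h2t]
      linarith
    linarith
  have hc2' : η ≤ 1 / 2 := by
    have h3 : 1/(2*t+2) ≤ 1/2 := by
      apply div_le_div_of_nonneg_left (by norm_num) (by norm_num)
      linarith
    linarith
  have hc3 : η * (1 + t * T) ≤ T - t := by
    have h1 : (0:ℝ) < 1 + t * T := htT0
    calc η * (1 + t*T) ≤ ((T - t)/(1 + t*T)) * (1 + t*T) :=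
          mul_le_mul_of_nonneg_right hηb h1.le
      _ = T - t := by field_simp
  have hyS2 : |yS| ≤ η * xS := by
    have h1 : η * ((n:ℝ) * (a/2)) = (n:ℝ) * (c₀ * ‖g₀‖) := by
      rw [hηdef]; field_simp
    have h2 : η * ((n:ℝ) * (a/2)) ≤ η * xS := mul_le_mul_of_nonneg_left hxS1 hηpos.le
    linarith
  -- argument hypothesis in algebraic form
  have hxy2 : x ^ 2 + y ^ 2 = (‖g₀‖) ^ 2 := by
    rw [hxdef, hydef, Complex.sq_norm, Complex.normSq_apply]; ring
  have hgalg : x < 0 → T * (-x) ≤ |y| := fun hx =>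
    galg_aux (Real.sin δ) (Real.cos δ) T x y (‖g₀‖) hsδ hcδ
      (Real.sin_sq_add_cos_sq δ) hTc habspos hxy2
      (argToAlg_aux δ hδ0 hδ2 g₀ harg hx) hx
  -- main estimate
  have hmulre : (g₀ * S).re = x * xS - y * yS := Complex.mul_re _ _
  have hmulim : (g₀ * S).im = x * yS + y * xS := Complex.mul_im _ _
  have hkey : t ^ 2 / (1 + t ^ 2) ≤ (1 + (x * xS - y * yS)) ^ 2 + (x * yS + y * xS) ^ 2 := by
    apply keyquad_aux _ _ _ htpos
    intro hu
    exact transfer_aux T t η x y xS yS hTpos htpos hηpos hc1 hc2' hc3 hxSpos hyS2 hgalg hu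
  have hteq : (Real.sin (δ/2)) ^ 2 ≤ t ^ 2 / (1 + t ^ 2) :=
    tansq_aux _ _ _ hc2 (Real.sin_sq_add_cos_sq (δ/2)) htc
  have hsin2 : Real.sin δ = 2 * Real.sin (δ/2) * Real.cos (δ/2) := by
    have h := Real.sin_two_mul (δ/2)
    rw [show 2 * (δ/2) = δ by ring] at h
    linarith
  have h2 : (Real.sin δ / 2) ^ 2 ≤ (Real.sin (δ/2)) ^ 2 := by
    rw [hsin2]
    exact half_aux _ _ hs2.le (Real.cos_le_one _) hc2.le
  have hfinal2 : (Real.sin δ / 2) ^ 2 ≤ Complex.normSq (1 + g₀ * S) := by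
    have h1 : Complex.normSq (1 + g₀ * S) =
        (1 + (x * xS - y * yS)) ^ 2 + (x * yS + y * xS) ^ 2 := by
      rw [Complex.normSq_apply, Complex.add_re, Complex.add_im, Complex.one_re,
        Complex.one_im, hmulre, hmulim]
      ring
    rw [h1]
    calc (Real.sin δ / 2) ^ 2 ≤ (Real.sin (δ/2)) ^ 2 := h2
      _ ≤ t ^ 2 / (1 + t ^ 2) := hteq
      _ ≤ _ := hkey
  rw [Complex.norm_def]
  exact (Real.le_sqrt (by positivity) (Complex.normSq_nonneg _)).mpr hfinal2
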